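/- arXiv:1810.00416 — 3 statements merged into one kernel-verified Lean document; each statement's English description precedes it below -/
import Mathlib

section
/- Let (Q,·) be a quasigroup and (S₁, S₂, S₃) a subsquare of Q with S₁, S₂, S₃ nonempty. Fix u ∈ S₁ and v ∈ S₂ and define the principal loop isotope x ⊕ y = (x/v) · (u\y). Then S₃ is closed under ⊕, i.e., S₃ ⊕ S₃ ⊆ S₃, and contains the unit element u·v; in particular S₃ is a subloop of (Q, ⊕). -/
/-- A quasigroup: a binary operation with left and right division. -/
structure Quasigroup (Q : Type*) where
  mul : Q → Q → Q
  ldiv : Q → Q → Q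
  rdiv : Q → Q → Q
  mul_ldiv : ∀ x z, mul x (ldiv x z) = z
  ldiv_mul : ∀ x y, ldiv x (mul x y) = y
  rdiv_mul : ∀ z y, mul (rdiv z y) y = z
  mul_rdiv : ∀ x y, rdiv (mul x y) y = x

/-- `(S₁, S₂, S₃)` is a subsquare of the quasigroup `q`. -/
def IsSubsquare {Q : Type*} (q : Quasigroup Q) (S₁ S₂ S₃ : Set Q) : Prop :=
  (∀ x ∈ S₁, ∀ y ∈ S₂, q.mul x y ∈ S₃) ∧
  (∀ x ∈ S₁, ∀ z ∈ S₃, q.ldiv x z ∈ S₂) ∧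
  (∀ z ∈ S₃, ∀ y ∈ S₂, q.rdiv z y ∈ S₁)

/-- For a nonempty subsquare `(S₁,S₂,S₃)` and `u ∈ S₁`, `v ∈ S₂`, the set `S₃`
is closed under the principal loop isotope `x ⊕ y = (x/v)·(u\y)` and contains
its unit element `u·v`; in particular `S₃` is a subloop of `(Q,⊕)`. -/
theorem subsquare_is_subloop_of_principal_isotope {Q : Type*} (q : Quasigroup Q)
    (S₁ S₂ S₃ : Set Q) (hS : IsSubsquare q S₁ S₂ S₃)
    (h₁ : S₁.Nonempty) (h₂ : S₂.Nonempty) (h₃ : S₃.Nonempty)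
    (u v : Q) (hu : u ∈ S₁) (hv : v ∈ S₂)
    (op : Q → Q → Q) (hop : ∀ x y, op x y = q.mul (q.rdiv x v) (q.ldiv u y)) :
    (∀ x ∈ S₃, ∀ y ∈ S₃, op x y ∈ S₃) ∧ q.mul u v ∈ S₃ := by
  obtain ⟨hm, hl, hr⟩ := hS
  refine ⟨fun x hx y hy => ?_, hm u hu v hv⟩
  rw [hop]
  exact hm _ (hr x hx v hv) _ (hl u hu y hy)
end

section
/- Let Σ be an abstract light dual multinet labeled by a quasigroup Q, β : P → PG(2, 𝕃) a weak projective embedding of Σ, and B ⊆ P a merged block of β, i.e., B = β⁻¹(ℓ) for a projective line ℓ, |B| > 1, and B is not a block of Σ. If B meets at least two of the components P₁, P₂, P₃, then the triple (S₁, S₂, S₃), where S_i = {x ∈ Q : α_i(x) ∈ B}, is a subsquare of Q; in particular |S₁| = |S₂| = |S₃|. -/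
open Projectivization

/-- An abstract light dual multinet with point set `P`, labeled by the
quasigroup `q` via the labeling maps `α₁, α₂, α₃`. -/
structure LightDualMultinet {Q P : Type*} (q : Quasigroup Q) where
  α₁ : Q → P
  α₂ : Q → P
  α₃ : Q → P
  inj₁ : Function.Injective α₁
  inj₂ : Function.Injective α₂
  inj₃ : Function.Injective α₃
  disj₁₂ : Disjoint (Set.range α₁) (Set.range α₂)
  disj₁₃ : Disjoint (Set.range α₁) (Set.range α₃)
  disj₂₃ : Disjoint (Set.range α₂) (Set.range α₃)
  cover : Set.range α₁ ∪ Set.range α₂ ∪ Set.range α₃ = Set.univ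
  M : Set (Set P)
  at_most_one : ∀ B ∈ M, ∀ C ∈ M, ∀ p p' : P,
    p ≠ p' → p ∈ B → p' ∈ B → p ∈ C → p' ∈ C → B = C
  collinear : ∀ x y : Q, ∃ B ∈ M, α₁ x ∈ B ∧ α₂ y ∈ B ∧ α₃ (q.mul x y) ∈ B
  nondegenerate : ∃ B ∈ M, ∃ C ∈ M, B ≠ C

lemma pair_indep_of_ne {𝕃 V : Type*} [Field 𝕃] [AddCommGroup V] [Module 𝕃 V]
    {u v : Projectivization 𝕃 V} (h : u ≠ v) :
    LinearIndependent 𝕃 ![u.rep, v.rep] := by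
  have h2 := (Projectivization.independent_pair_iff_ne u v).2 h
  rw [Projectivization.independent_iff] at h2
  convert h2 using 1
  ext i
  fin_cases i <;> simp

lemma mem_of_dep {𝕃 : Type*} [Field 𝕃] {W : Submodule 𝕃 (Fin 3 → 𝕃)}
    (hW : Module.finrank 𝕃 W = 2) {v₁ v₂ v₃ : Fin 3 → 𝕃}
    (h1 : v₁ ∈ W) (h2 : v₂ ∈ W) (hind : LinearIndependent 𝕃 ![v₁, v₂])
    (hdep : ¬ LinearIndependent 𝕃 ![v₁, v₂, v₃]) : v₃ ∈ W := by
  have hle : Submodule.span 𝕃 (Set.range ![v₁, v₂]) ≤ W := by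
    rw [Submodule.span_le]
    rintro x ⟨i, rfl⟩
    fin_cases i <;> simpa
  have hsp : Submodule.span 𝕃 (Set.range ![v₁, v₂]) = W := by
    apply Submodule.eq_of_le_of_finrank_le hle
    rw [hW, finrank_span_eq_card hind]
    simp
  have hv3 : v₃ ∈ Submodule.span 𝕃 (Set.range ![v₁, v₂]) := by
    by_contra h
    apply hdep
    have := linearIndependent_fin_snoc.mpr ⟨hind, h⟩
    convert this using 1
    · funext i
      fin_cases i <;> rfl
    · rfl
  rwa [hsp] at hv3

/-- If `B` is a merged block of a weak projective embedding `β` of an abstract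
light dual multinet (the preimage of a projective line, with more than one
point, not a block of the multinet) which meets at least two of the three
components, then `(S₁,S₂,S₃)` with `S_i = {x : α_i x ∈ B}` is a subsquare of
the labeling quasigroup; in particular `|S₁| = |S₂| = |S₃|`. -/
theorem merged_block_gives_subsquare {Q P : Type*} [Fintype Q]
    (q : Quasigroup Q) (N : @LightDualMultinet Q P q)
    {𝕃 : Type*} [Field 𝕃]
    (β : P → Projectivization 𝕃 (Fin 3 → 𝕃))
    (hinj : Function.Injective β)
    (hspan : ∃ p₁ p₂ p₃ : P,
      LinearIndependent 𝕃 ![(β p₁).rep, (β p₂).rep, (β p₃).rep])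
    (hcol : ∀ C ∈ N.M, ∀ p₁ p₂ p₃ : P, p₁ ∈ C → p₂ ∈ C → p₃ ∈ C →
      ¬ LinearIndependent 𝕃 ![(β p₁).rep, (β p₂).rep, (β p₃).rep])
    (B : Set P) (W : Submodule 𝕃 (Fin 3 → 𝕃))
    (hW : Module.finrank 𝕃 W = 2)
    (hBW : B = {p : P | (β p).rep ∈ W})
    (hBcard : 1 < B.ncard) (hBnotblock : B ∉ N.M)
    (S₁ S₂ S₃ : Set Q)
    (hS₁ : S₁ = {x : Q | N.α₁ x ∈ B}) (hS₂ : S₂ = {y : Q | N.α₂ y ∈ B})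
    (hS₃ : S₃ = {z : Q | N.α₃ z ∈ B})
    (htwo : (S₁.Nonempty ∧ S₂.Nonempty) ∨ (S₁.Nonempty ∧ S₃.Nonempty) ∨
      (S₂.Nonempty ∧ S₃.Nonempty)) :
    IsSubsquare q S₁ S₂ S₃ ∧ S₁.ncard = S₂.ncard ∧ S₂.ncard = S₃.ncard := by
  -- key absorption: a point dependent on two distinct points of B lies in B
  have hB : ∀ p₁ p₂ p₃ : P, p₁ ∈ B → p₂ ∈ B → p₁ ≠ p₂ →
      ¬ LinearIndependent 𝕃 ![(β p₁).rep, (β p₂).rep, (β p₃).rep] → p₃ ∈ B := by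
    intro p₁ p₂ p₃ h1 h2 hne hdep
    rw [hBW] at h1 h2 ⊢
    exact mem_of_dep hW h1 h2 (pair_indep_of_ne (fun h => hne (hinj h))) hdep
  -- distinctness of points in different components
  have hd12 : ∀ x y : Q, N.α₁ x ≠ N.α₂ y := fun x y h =>
    Set.disjoint_left.1 N.disj₁₂ ⟨x, rfl⟩ ⟨y, h.symm⟩
  have hd13 : ∀ x z : Q, N.α₁ x ≠ N.α₃ z := fun x z h =>
    Set.disjoint_left.1 N.disj₁₃ ⟨x, rfl⟩ ⟨z, h.symm⟩
  have hd23 : ∀ y z : Q, N.α₂ y ≠ N.α₃ z := fun y z h =>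
    Set.disjoint_left.1 N.disj₂₃ ⟨y, rfl⟩ ⟨z, h.symm⟩
  rw [hS₁, hS₂, hS₃]
  have hmul : ∀ x, N.α₁ x ∈ B → ∀ y, N.α₂ y ∈ B → N.α₃ (q.mul x y) ∈ B := by
    intro x hx y hy
    obtain ⟨C, hC, h1, h2, h3⟩ := N.collinear x y
    exact hB _ _ _ hx hy (hd12 x y) (hcol C hC _ _ _ h1 h2 h3)
  have hldiv : ∀ x, N.α₁ x ∈ B → ∀ z, N.α₃ z ∈ B → N.α₂ (q.ldiv x z) ∈ B := by
    intro x hx z hz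
    obtain ⟨C, hC, h1, h2, h3⟩ := N.collinear x (q.ldiv x z)
    rw [q.mul_ldiv] at h3
    exact hB _ _ _ hx hz (hd13 x z) (hcol C hC _ _ _ h1 h3 h2)
  have hrdiv : ∀ z, N.α₃ z ∈ B → ∀ y, N.α₂ y ∈ B → N.α₁ (q.rdiv z y) ∈ B := by
    intro z hz y hy
    obtain ⟨C, hC, h1, h2, h3⟩ := N.collinear (q.rdiv z y) y
    rw [q.rdiv_mul] at h3
    exact hB _ _ _ hz hy (hd23 y z).symm (hcol C hC _ _ _ h3 h2 h1)
  refine ⟨⟨hmul, hldiv, hrdiv⟩, ?_⟩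
  -- get elements of S₁ and S₂
  rw [hS₁, hS₂, hS₃] at htwo
  obtain ⟨⟨x₀, hx₀⟩, ⟨y₀, hy₀⟩⟩ :
      (∃ x, N.α₁ x ∈ B) ∧ (∃ y, N.α₂ y ∈ B) := by
    rcases htwo with ⟨⟨x, hx⟩, ⟨y, hy⟩⟩ | ⟨⟨x, hx⟩, ⟨z, hz⟩⟩ | ⟨⟨y, hy⟩, ⟨z, hz⟩⟩
    · exact ⟨⟨x, hx⟩, ⟨y, hy⟩⟩
    · exact ⟨⟨x, hx⟩, ⟨q.ldiv x z, hldiv x hx z hz⟩⟩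
    · exact ⟨⟨q.rdiv z y, hrdiv z hz y hy⟩, ⟨y, hy⟩⟩
  -- bijections
  have h32 : {z : Q | N.α₃ z ∈ B} = (q.mul x₀) '' {y : Q | N.α₂ y ∈ B} := by
    ext z
    constructor
    · intro hz
      exact ⟨q.ldiv x₀ z, hldiv x₀ hx₀ z hz, q.mul_ldiv x₀ z⟩
    · rintro ⟨y, hy, rfl⟩
      exact hmul x₀ hx₀ y hy
  have h31 : {z : Q | N.α₃ z ∈ B} = (fun x => q.mul x y₀) '' {x : Q | N.α₁ x ∈ B} := by
    ext z
    constructor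
    · intro hz
      exact ⟨q.rdiv z y₀, hrdiv z hz y₀ hy₀, q.rdiv_mul z y₀⟩
    · rintro ⟨x, hx, rfl⟩
      exact hmul x hx y₀ hy₀
  have hinjL : Function.Injective (q.mul x₀) := fun a b h => by
    have := congrArg (q.ldiv x₀) h
    rwa [q.ldiv_mul, q.ldiv_mul] at this
  have hinjR : Function.Injective (fun x => q.mul x y₀) := fun a b h => by
    have := congrArg (fun t => q.rdiv t y₀) h
    simp only [q.mul_rdiv] at this
    exact this
  have e2 := Set.ncard_image_of_injective {y : Q | N.α₂ y ∈ B} hinjL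
  have e1 := Set.ncard_image_of_injective {x : Q | N.α₁ x ∈ B} hinjR
  constructor
  · rw [← e1, ← h31, h32, e2]
  · rw [← e2, ← h32]
end

section
/- Let Q be a quasigroup of order 6. Every proper subsquare of Q can be generated by a triple of the form ({x, y}, {z}, ∅): that is, for every proper subsquare (S₁, S₂, S₃) of Q there exist x ≠ y in S₁ and z ∈ S₂ such that the smallest subsquare (T₁, T₂, T₃) with {x,y} ⊆ T₁ and {z} ⊆ T₂ equals (S₁, S₂, S₃). -/
private lemma ncard_le_of_maps {Q : Type*} [Fintype Q] (S T : Set Q) (f : Q → Q)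
    (hmaps : ∀ a ∈ S, f a ∈ T)
    (hinj : ∀ a ∈ S, ∀ b ∈ S, f a = f b → a = b) : S.ncard ≤ T.ncard := by
  calc S.ncard = (f '' S).ncard := (Set.ncard_image_of_injOn hinj).symm
    _ ≤ T.ncard := Set.ncard_le_ncard
        (by rintro _ ⟨a, ha, rfl⟩; exact hmaps a ha) T.toFinite

/-- In a quasigroup of order 6, every proper subsquare `(S₁,S₂,S₃)` is
generated by a triple of the form `({x,y}, {z}, ∅)`: there are `x ≠ y` in
`S₁` and `z ∈ S₂` such that `(S₁,S₂,S₃)` is the smallest subsquare whose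
first part contains `{x,y}` and whose second part contains `z`. -/
theorem proper_subsquare_generated_by_three_elements {Q : Type*} [Fintype Q]
    (hQ : Fintype.card Q = 6) (q : Quasigroup Q)
    (S₁ S₂ S₃ : Set Q) (hS : IsSubsquare q S₁ S₂ S₃)
    (h₁ : S₁.Nonempty) (h₂ : S₂.Nonempty) (h₃ : S₃.Nonempty)
    (hlow : 1 < S₁.ncard) (hhigh : S₁.ncard < 6) :
    ∃ x y z : Q, x ≠ y ∧ x ∈ S₁ ∧ y ∈ S₁ ∧ z ∈ S₂ ∧
      ∀ T₁ T₂ T₃ : Set Q, IsSubsquare q T₁ T₂ T₃ →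
        x ∈ T₁ → y ∈ T₁ → z ∈ T₂ → S₁ ⊆ T₁ ∧ S₂ ⊆ T₂ ∧ S₃ ⊆ T₃ := by
  -- cancellation lemmas
  have rc : ∀ a b c : Q, q.mul a c = q.mul b c → a = b := by
    intro a b c h
    have := congrArg (fun w => q.rdiv w c) h
    simpa [q.mul_rdiv] using this
  have lc : ∀ a b c : Q, q.mul a b = q.mul a c → b = c := by
    intro a b c h
    have := congrArg (fun w => q.ldiv a w) h
    simpa [q.ldiv_mul] using this
  have ldc : ∀ a b c : Q, q.ldiv a b = q.ldiv a c → b = c := by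
    intro a b c h
    have := congrArg (fun w => q.mul a w) h
    simpa [q.mul_ldiv] using this
  have rdc : ∀ a b c : Q, q.rdiv a c = q.rdiv b c → a = b := by
    intro a b c h
    have := congrArg (fun w => q.mul w c) h
    simpa [q.rdiv_mul] using this
  -- pick x ≠ y in S₁ and z in S₂
  obtain ⟨x, hx, y, hy, hxy⟩ := (Set.one_lt_ncard S₁.toFinite).mp hlow
  obtain ⟨z, hz⟩ := h₂
  -- cardinality equalities
  have e23 : S₂.ncard = S₃.ncard :=
    le_antisymm
      (ncard_le_of_maps S₂ S₃ (q.mul x) (fun a ha => hS.1 x hx a ha)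
        (fun a _ b _ h => lc x a b h))
      (ncard_le_of_maps S₃ S₂ (q.ldiv x) (fun a ha => hS.2.1 x hx a ha)
        (fun a _ b _ h => ldc x a b h))
  have e13 : S₁.ncard = S₃.ncard :=
    le_antisymm
      (ncard_le_of_maps S₁ S₃ (fun v => q.mul v z) (fun a ha => hS.1 a ha z hz)
        (fun a _ b _ h => rc a b z h))
      (ncard_le_of_maps S₃ S₁ (fun w => q.rdiv w z) (fun a ha => hS.2.2 a ha z hz)
        (fun a _ b _ h => rdc a b z h))
  -- bound: ncard S₁ ≤ 3
  have hcompl : S₃.ncard + S₃ᶜ.ncard = 6 := by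
    rw [Set.ncard_add_ncard_compl, Nat.card_eq_fintype_card, hQ]
  have hy₀ : ∃ y₀ : Q, y₀ ∉ S₂ := by
    by_contra h
    push_neg at h
    have : S₂ = Set.univ := Set.eq_univ_of_forall h
    rw [this, Set.ncard_univ, Nat.card_eq_fintype_card, hQ] at e23
    omega
  obtain ⟨y₀, hy₀⟩ := hy₀
  have hle : S₁.ncard ≤ S₃ᶜ.ncard := by
    refine ncard_le_of_maps S₁ S₃ᶜ (fun v => q.mul v y₀) ?_ (fun a _ b _ h => rc a b y₀ h)
    intro a ha hmem
    exact hy₀ (by simpa [q.ldiv_mul] using hS.2.1 a ha _ hmem)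
  have hr3 : S₁.ncard = 2 ∨ S₁.ncard = 3 := by omega
  refine ⟨x, y, z, hxy, hx, hy, hz, ?_⟩
  intro T₁ T₂ T₃ hT hxT hyT hzT
  set a := q.mul x z with ha_def
  set b := q.mul y z with hb_def
  have haS : a ∈ S₃ := hS.1 x hx z hz
  have hbS : b ∈ S₃ := hS.1 y hy z hz
  have haT : a ∈ T₃ := hT.1 x hxT z hzT
  have hbT : b ∈ T₃ := hT.1 y hyT z hzT
  have hab : a ≠ b := fun h => hxy (rc x y z h)
  -- key: S₃ ⊆ T₃
  have key : S₃ ⊆ T₃ := by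
    rcases hr3 with hr | hr
    · -- order 2: S₃ = {a, b}
      have hS3 : ({a, b} : Set Q) = S₃ := by
        refine Set.eq_of_subset_of_ncard_le ?_ ?_ S₃.toFinite
        · intro w hw; rcases hw with h | h
          · subst h; exact haS
          · simp only [Set.mem_singleton_iff] at h; subst h; exact hbS
        · rw [Set.ncard_pair hab, ← e13, hr]
      intro w hw
      rw [← hS3] at hw
      rcases hw with h | h
      · subst h; exact haT
      · simp only [Set.mem_singleton_iff] at h; subst h; exact hbT
    · -- order 3
      set z' := q.ldiv x b with hz'_def
      have hz'S : z' ∈ S₂ := hS.2.1 x hx b hbS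
      have hz'T : z' ∈ T₂ := hT.2.1 x hxT b hbT
      have hxz' : q.mul x z' = b := q.mul_ldiv x b
      have hz'z : z' ≠ z := by
        intro h
        exact hab (by rw [ha_def, ← h, hxz'])
      set c := q.mul y z' with hc_def
      have hcS : c ∈ S₃ := hS.1 y hy z' hz'S
      have hcT : c ∈ T₃ := hT.1 y hyT z' hz'T
      have hcb : c ≠ b := fun h => hz'z (lc y z' z (by rw [← hc_def, h, hb_def]))
      have hca : c ≠ a := by
        intro hca
        -- find z'' ∈ S₂ \ {z, z'}
        have hns : ¬ S₂ ⊆ ({z, z'} : Set Q) := by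
          intro hsub
          have h1 : S₂.ncard ≤ ({z, z'} : Set Q).ncard :=
            Set.ncard_le_ncard hsub (Set.toFinite _)
          have h2 : ({z, z'} : Set Q).ncard ≤ 2 := by
            have := Set.ncard_insert_le z ({z'} : Set Q)
            simpa [Set.ncard_singleton] using this
          rw [e23, ← e13, hr] at h1
          omega
        obtain ⟨z'', hz''S, hz''⟩ := Set.not_subset.mp hns
        simp only [Set.mem_insert_iff, Set.mem_singleton_iff, not_or] at hz''
        obtain ⟨hz''z, hz''z'⟩ := hz''
        have hx'' : q.mul x z'' ∈ S₃ \ ({a, b} : Set Q) := by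
          refine ⟨hS.1 x hx z'' hz''S, ?_⟩
          simp only [Set.mem_insert_iff, Set.mem_singleton_iff, not_or]
          exact ⟨fun h => hz''z (lc x z'' z (by rw [h, ha_def])),
                 fun h => hz''z' (lc x z'' z' (by rw [h, ← hxz']))⟩
        have hy'' : q.mul y z'' ∈ S₃ \ ({a, b} : Set Q) := by
          refine ⟨hS.1 y hy z'' hz''S, ?_⟩
          simp only [Set.mem_insert_iff, Set.mem_singleton_iff, not_or]
          exact ⟨fun h => hz''z' (lc y z'' z' (by rw [h, ← hca, hc_def])),
                 fun h => hz''z (lc y z'' z (by rw [h, hb_def]))⟩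
        have habsub : ({a, b} : Set Q) ⊆ S₃ := by
          intro w hw
          rcases hw with h | h
          · subst h; exact haS
          · simp only [Set.mem_singleton_iff] at h; subst h; exact hbS
        have hd : (S₃ \ ({a, b} : Set Q)).ncard = 1 := by
          rw [Set.ncard_diff habsub, Set.ncard_pair hab, ← e13, hr]
        obtain ⟨u, hu⟩ := Set.ncard_eq_one.mp hd
        rw [hu] at hx'' hy''
        simp only [Set.mem_singleton_iff] at hx'' hy''
        exact hxy (rc x y z'' (by rw [hx'', hy'']))
      have hS3 : ({a, b, c} : Set Q) = S₃ := by
        refine Set.eq_of_subset_of_ncard_le ?_ ?_ S₃.toFinite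
        · intro w hw
          rcases hw with h | h | h
          · subst h; exact haS
          · subst h; exact hbS
          · simp only [Set.mem_singleton_iff] at h; subst h; exact hcS
        · have h1 : ({a, b, c} : Set Q).ncard = 3 := by
            rw [Set.ncard_insert_of_notMem (by
                simp only [Set.mem_insert_iff, Set.mem_singleton_iff, not_or]
                exact ⟨hab, fun h => hca h.symm⟩) (Set.toFinite _),
              Set.ncard_pair (fun h => hcb h.symm)]
          rw [h1, ← e13, hr]
      intro w hw
      rw [← hS3] at hw
      rcases hw with h | h | h
      · subst h; exact haT
      · subst h; exact hbT
      · simp only [Set.mem_singleton_iff] at h; subst h; exact hcT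
  refine ⟨?_, ?_, key⟩
  · intro v hv
    have h1 : q.mul v z ∈ T₃ := key (hS.1 v hv z hz)
    have h2 : v = q.rdiv (q.mul v z) z := (q.mul_rdiv v z).symm
    rw [h2]
    exact hT.2.2 _ h1 z hzT
  · intro w hw
    have h1 : q.mul x w ∈ T₃ := key (hS.1 x hx w hw)
    have h2 : w = q.ldiv x (q.mul x w) := (q.ldiv_mul x w).symm
    rw [h2]
    exact hT.2.1 x hxT _ h1
end
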